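/- Let k ≥ 2 and d ≥ 2k be integers. Then the k-th largest distance eigenvalue of the path P_d on d vertices satisfies λ_k(D(P_d)) ≥ −1. -/

import Mathlib

open Finset SimpleGraph

/-- The distance matrix of a simple graph on `Fin n`, as a real matrix: the
`(i,j)` entry is the graph distance `d_G(i,j)`. -/
noncomputable def distMatrix {n : ℕ} (G : SimpleGraph (Fin n)) :
    Matrix (Fin n) (Fin n) ℝ :=
  fun i j => (G.dist i j : ℝ)

/-- The eigenvalues of the distance matrix, listed in decreasing order. -/
noncomputable def distEigList {n : ℕ} (G : SimpleGraph (Fin n)) : List ℝ :=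
  if h : (distMatrix G).IsHermitian then
    (List.ofFn h.eigenvalues).insertionSort (· ≥ ·)
  else []

/-- `distEig G k` is the `k`-th largest distance eigenvalue `λ_k(D(G))` (`1`-indexed). -/
noncomputable def distEig {n : ℕ} (G : SimpleGraph (Fin n)) (k : ℕ) : ℝ :=
  (distEigList G).getD (k - 1) 0

/-- `S_k(D(G))`, the sum of the `k` largest distance eigenvalues. -/
noncomputable def distEigSum {n : ℕ} (G : SimpleGraph (Fin n)) (k : ℕ) : ℝ :=
  ((distEigList G).take k).sum

/-- `G` has independence number at most `s`: every set of pairwise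
nonadjacent vertices has at most `s` elements. -/
def IndepNumLE {V : Type*} (G : SimpleGraph V) (s : ℕ) : Prop :=
  ∀ S : Finset V, (∀ u ∈ S, ∀ v ∈ S, u ≠ v → ¬ G.Adj u v) → S.card ≤ s

section Aux

open Matrix

lemma aux_pathGraph_exists_walk {n : ℕ} : ∀ (m : ℕ) (u v : Fin n), u.val + m = v.val →
    ∃ p : (pathGraph n).Walk u v, p.length = m := by
  intro m
  induction m with
  | zero => intro u v h; obtain rfl : u = v := Fin.ext (by omega); exact ⟨.nil, rfl⟩
  | succ m ih =>
    intro u v h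
    have hu1 : u.val + 1 < n := by omega
    set u' : Fin n := ⟨u.val + 1, hu1⟩ with hu'
    have hadj : (pathGraph n).Adj u u' := pathGraph_adj.2 (Or.inl rfl)
    obtain ⟨p, hp⟩ := ih u' v (by simp [hu']; omega)
    exact ⟨.cons hadj p, by simp [hp]⟩

lemma aux_pathGraph_walk_ge {n : ℕ} {u v : Fin n} (p : (pathGraph n).Walk u v) :
    (v.val : ℤ) - u.val ≤ p.length ∧ (u.val : ℤ) - v.val ≤ p.length := by
  induction p with
  | nil => simp
  | @cons a b c hadj q ih =>
    rw [pathGraph_adj] at hadj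
    simp only [SimpleGraph.Walk.length_cons]
    push_cast
    omega

lemma aux_pathGraph_dist {n : ℕ} (u v : Fin n) (h : u.val ≤ v.val) :
    (pathGraph n).dist u v = v.val - u.val := by
  obtain ⟨p, hp⟩ := aux_pathGraph_exists_walk (v.val - u.val) u v (by omega)
  refine le_antisymm (hp ▸ SimpleGraph.dist_le p) ?_
  rcases Nat.eq_zero_or_pos ((pathGraph n).dist u v) with h0 | h0
  · rw [h0]
    rw [SimpleGraph.dist_eq_zero_iff_eq_or_not_reachable] at h0
    rcases h0 with rfl | h0
    · omega
    · exact absurd (pathGraph_preconnected n u v) h0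
  · obtain ⟨q, hq⟩ := SimpleGraph.exists_walk_of_dist_ne_zero (G := pathGraph n) (u := u)
      (v := v) (by omega)
    have := (aux_pathGraph_walk_ge q).1
    omega

lemma aux_eig_count {n k : ℕ} {A : Matrix (Fin n) (Fin n) ℝ} (hA : A.IsHermitian) (t : ℝ)
    (v : Fin k → (Fin n → ℝ))
    (hv0 : ∀ c : Fin k → ℝ, (∑ j, c j • v j) = 0 → c = 0)
    (hq : ∀ c : Fin k → ℝ,
      t * ((∑ j, c j • v j) ⬝ᵥ (∑ j, c j • v j)) ≤ (∑ j, c j • v j) ⬝ᵥ (A *ᵥ (∑ j, c j • v j))) :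
    k ≤ Fintype.card {i : Fin n // t ≤ hA.eigenvalues i} := by
  by_contra hcard
  push_neg at hcard
  set U : Matrix (Fin n) (Fin n) ℝ := (hA.eigenvectorUnitary : Matrix (Fin n) (Fin n) ℝ) with hU
  set μ : Fin n → ℝ := hA.eigenvalues with hμ
  have hUU : U * star U = 1 := Unitary.mul_star_self_of_mem (hA.eigenvectorUnitary).2
  have hsUT : star U = Uᵀ := by
    rw [Matrix.star_eq_conjTranspose]
    ext i j
    simp [Matrix.conjTranspose_apply]
  set V : Matrix (Fin n) (Fin k) ℝ := Matrix.of (fun i j => v j i) with hV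
  have hVc : ∀ c : Fin k → ℝ, V *ᵥ c = ∑ j, c j • v j := by
    intro c; funext i
    simp [hV, Matrix.mulVec, dotProduct, Finset.sum_apply, mul_comm]
  set φ : (Fin k → ℝ) →ₗ[ℝ] ({i : Fin n // t ≤ μ i} → ℝ) :=
    (LinearMap.funLeft ℝ ℝ Subtype.val) ∘ₗ (star U).mulVecLin ∘ₗ V.mulVecLin with hφ
  have hninj : ¬ Function.Injective φ := by
    intro hinj
    have h1 := LinearMap.finrank_le_finrank_of_injective hinj
    rw [Module.finrank_fintype_fun_eq_card, Module.finrank_fintype_fun_eq_card] at h1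
    simp only [Fintype.card_fin] at h1
    omega
  rw [Function.not_injective_iff] at hninj
  obtain ⟨a, b, hab, hne⟩ := hninj
  set c : Fin k → ℝ := a - b with hc
  have hc0 : c ≠ 0 := sub_ne_zero.2 hne
  have hφc : φ c = 0 := by rw [hc, map_sub, hab, sub_self]
  set x : Fin n → ℝ := ∑ j, c j • v j with hx
  have hxne : x ≠ 0 := fun h => hc0 (hv0 c h)
  set y : Fin n → ℝ := star U *ᵥ x with hy
  have hy0 : ∀ i : Fin n, t ≤ μ i → y i = 0 := by
    intro i hi
    have h1 := congrFun hφc ⟨i, hi⟩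
    have h2 : star U *ᵥ (∑ j, c j • v j) = ∑ j, c j • (star U *ᵥ v j) := by
      rw [show (star U) *ᵥ (∑ j, c j • v j) = (star U).mulVecLin (∑ j, c j • v j) from rfl,
        map_sum]
      simp [Matrix.mulVecLin_apply, Matrix.mulVec_smul]
    rw [hy, hx, h2]
    simpa [hφ, hVc, Finset.sum_apply] using h1
  have hyne : y ≠ 0 := by
    intro h
    apply hxne
    have : U *ᵥ y = x := by
      rw [hy, Matrix.mulVec_mulVec, hUU, Matrix.one_mulVec]
    rw [h, Matrix.mulVec_zero] at this
    exact this.symm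
  have hdot : ∀ w : Fin n → ℝ, x ⬝ᵥ (U *ᵥ w) = y ⬝ᵥ w := by
    intro w
    rw [Matrix.dotProduct_mulVec, hy, hsUT, Matrix.mulVec_transpose]
  have hAxx : x ⬝ᵥ (A *ᵥ x) = ∑ i, μ i * (y i)^2 := by
    have hspec := hA.spectral_theorem
    have hdiag : Matrix.diagonal (RCLike.ofReal ∘ μ) = Matrix.diagonal μ := by
      ext i j; simp [Matrix.diagonal]
    calc x ⬝ᵥ (A *ᵥ x) = x ⬝ᵥ (U *ᵥ (Matrix.diagonal μ *ᵥ y)) := by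
          conv_lhs => rw [hspec, Unitary.conjStarAlgAut_apply]
          rw [← hμ, ← hU, hdiag, ← Matrix.mulVec_mulVec, ← Matrix.mulVec_mulVec, ← hy]
      _ = y ⬝ᵥ (Matrix.diagonal μ *ᵥ y) := hdot _
      _ = ∑ i, μ i * (y i)^2 := by
          simp only [dotProduct, Matrix.mulVec_diagonal]
          exact Finset.sum_congr rfl fun i _ => by ring
  have hxx : x ⬝ᵥ x = ∑ i, (y i)^2 := by
    have : y ⬝ᵥ y = x ⬝ᵥ x := by
      calc y ⬝ᵥ y = x ⬝ᵥ (U *ᵥ y) := by rw [dotProduct_comm, hdot]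
        _ = x ⬝ᵥ x := by rw [hy, Matrix.mulVec_mulVec, hUU, Matrix.one_mulVec]
    rw [← this]
    simp only [dotProduct]
    exact Finset.sum_congr rfl fun i _ => by ring
  have hqc := hq c
  rw [← hx, hAxx, hxx] at hqc
  have hneg : ∑ i, (μ i - t) * (y i)^2 < 0 := by
    have h0 : (0:ℝ) = ∑ _i : Fin n, (0:ℝ) := by simp
    rw [h0]
    apply Finset.sum_lt_sum
    · intro i _
      rcases le_or_gt t (μ i) with h | h
      · rw [hy0 i h]; simp
      · exact mul_nonpos_of_nonpos_of_nonneg (by linarith) (sq_nonneg _)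
    · obtain ⟨i0, hi0⟩ := Function.ne_iff.1 hyne
      refine ⟨i0, Finset.mem_univ _, ?_⟩
      have hμi : μ i0 < t := by
        by_contra h
        exact hi0 (hy0 i0 (not_lt.1 h))
      have hne0 : y i0 ≠ 0 := by simpa using hi0
      have : (0:ℝ) < (y i0)^2 := by positivity
      exact mul_neg_of_neg_of_pos (by linarith) this
  have hsplit : ∑ i, (μ i - t) * (y i)^2
      = (∑ i, μ i * (y i)^2) - t * ∑ i, (y i)^2 := by
    rw [Finset.mul_sum, ← Finset.sum_sub_distrib]
    exact Finset.sum_congr rfl fun i _ => by ring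
  linarith

lemma aux_sorted_getD_ge (t : ℝ) : ∀ (l : List ℝ) (m : ℕ), l.Pairwise (· ≥ ·) →
    m + 1 ≤ l.countP (fun x => decide (t ≤ x)) → t ≤ l.getD m 0 := by
  intro l
  induction l with
  | nil => intro m _ h; rw [List.countP_nil] at h; omega
  | cons a l ih =>
    intro m hs h
    rw [List.pairwise_cons] at hs
    match m with
    | 0 =>
      simp only [List.getD_cons_zero]
      by_contra hta
      push_neg at hta
      have h0 : (a :: l).countP (fun x => decide (t ≤ x)) = 0 := by
        rw [List.countP_eq_zero]
        intro x hx
        simp only [List.mem_cons] at hx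
        rcases hx with rfl | hx
        · simp [not_le.2 hta]
        · have := hs.1 x hx
          simp only [decide_eq_true_eq]
          push_neg
          linarith
      omega
    | m + 1 =>
      simp only [List.getD_cons_succ]
      apply ih m hs.2
      rw [List.countP_cons] at h
      have hle : (if decide (t ≤ a) = true then 1 else 0) ≤ 1 := by
        split <;> omega
      omega

lemma aux_sum_smul_dotProduct {n k : ℕ} (c : Fin k → ℝ) (u : Fin k → Fin n → ℝ)
    (w : Fin n → ℝ) :
    (∑ j, c j • u j) ⬝ᵥ w = ∑ j, c j * (u j ⬝ᵥ w) := by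
  simp only [dotProduct, Finset.sum_apply, Pi.smul_apply, smul_eq_mul, Finset.sum_mul,
    Finset.mul_sum]
  rw [Finset.sum_comm]
  exact Finset.sum_congr rfl fun j _ => Finset.sum_congr rfl fun i _ => by ring

lemma aux_dot_expand {n k : ℕ} (A : Matrix (Fin n) (Fin n) ℝ) (c : Fin k → ℝ)
    (v : Fin k → Fin n → ℝ) :
    (∑ j, c j • v j) ⬝ᵥ (A *ᵥ ∑ j, c j • v j)
      = ∑ j, ∑ j', (c j * c j') * (v j ⬝ᵥ (A *ᵥ v j')) := by
  have h1 : A *ᵥ (∑ j, c j • v j) = ∑ j', c j' • (A *ᵥ v j') := by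
    rw [show A *ᵥ (∑ j, c j • v j) = A.mulVecLin (∑ j, c j • v j) from rfl, map_sum]
    simp [Matrix.mulVecLin_apply, Matrix.mulVec_smul]
  rw [h1, aux_sum_smul_dotProduct]
  refine Finset.sum_congr rfl fun j _ => ?_
  rw [dotProduct_comm, aux_sum_smul_dotProduct, Finset.mul_sum]
  refine Finset.sum_congr rfl fun j' _ => ?_
  rw [dotProduct_comm]
  ring

end Aux

open Matrix in
theorem kth_largest_distance_eigenvalue_path_ge_neg_one {k d : ℕ}
    (hk : 2 ≤ k) (hd : 2 * k ≤ d) :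
    distEig (pathGraph d) k ≥ -1 := by
  have hA : (distMatrix (pathGraph d)).IsHermitian := by
    ext i j
    simp [distMatrix, Matrix.conjTranspose_apply, SimpleGraph.dist_comm]
  set A := distMatrix (pathGraph d) with hAdef
  set a : Fin k → Fin d := fun j => ⟨2 * j.val, by have := j.2; omega⟩ with ha
  set b : Fin k → Fin d := fun j => ⟨2 * j.val + 1, by have := j.2; omega⟩ with hb
  set v : Fin k → Fin d → ℝ := fun j => Pi.single (a j) 1 - Pi.single (b j) 1 with hv
  have hAval : ∀ u w : Fin d, u.val ≤ w.val → A u w = (w.val : ℝ) - u.val := by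
    intro u w h
    show ((pathGraph d).dist u w : ℝ) = _
    rw [aux_pathGraph_dist u w h, Nat.cast_sub h]
  have hAsym : ∀ u w : Fin d, A u w = A w u := fun u w => by
    simp [hAdef, distMatrix, SimpleGraph.dist_comm]
  have hvd : ∀ (j : Fin k) (w : Fin d → ℝ), v j ⬝ᵥ w = w (a j) - w (b j) := by
    intro j w
    simp [hv, sub_dotProduct, single_dotProduct]
  have hAv : ∀ j : Fin k, A *ᵥ v j = fun i => A i (a j) - A i (b j) := by
    intro j
    funext i
    simp [hv, Matrix.mulVec_sub, Matrix.mulVec_single]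
  have hentryA : ∀ j j' : Fin k, v j ⬝ᵥ (A *ᵥ v j') = if j = j' then -2 else 0 := by
    intro j j'
    rw [hAv j', hvd j]
    rcases lt_trichotomy j j' with h | h | h
    · have hjj : j.val < j'.val := h
      rw [if_neg (ne_of_lt h)]
      rw [hAval (a j) (a j') (by simp [ha]; omega),
        hAval (a j) (b j') (by simp [ha, hb]; omega),
        hAval (b j) (a j') (by simp [ha, hb]; omega),
        hAval (b j) (b j') (by simp [ha, hb]; omega)]
      simp only [ha, hb]
      push_cast
      try ring
    · subst h
      rw [if_pos rfl]
      rw [hAval (a j) (a j) le_rfl, hAval (a j) (b j) (by simp [ha, hb]),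
        hAsym (b j) (a j), hAval (a j) (b j) (by simp [ha, hb]),
        hAval (b j) (b j) le_rfl]
      simp only [ha, hb]
      push_cast
      try ring
    · have hjj : j'.val < j.val := h
      rw [if_neg (ne_of_gt h)]
      rw [hAsym (a j) (a j'), hAsym (a j) (b j'), hAsym (b j) (a j'), hAsym (b j) (b j')]
      rw [hAval (a j') (a j) (by simp [ha]; omega),
        hAval (b j') (a j) (by simp [ha, hb]; omega),
        hAval (a j') (b j) (by simp [ha, hb]; omega),
        hAval (b j') (b j) (by simp [ha, hb]; omega)]
      simp only [ha, hb]
      push_cast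
      try ring
  have haa : ∀ j j' : Fin k, a j = a j' ↔ j = j' := by
    intro j j'
    simp only [ha, Fin.ext_iff]
    omega
  have hbb : ∀ j j' : Fin k, b j = b j' ↔ j = j' := by
    intro j j'
    simp only [hb, Fin.ext_iff]
    omega
  have hab : ∀ j j' : Fin k, a j ≠ b j' := by
    intro j j'
    simp only [ha, hb, Fin.ext_iff, ne_eq]
    omega
  have hvapp : ∀ j j' : Fin k, v j' (a j) = if j' = j then 1 else 0 := by
    intro j j'
    have h2 : ¬ (a j = b j') := hab j j'
    by_cases h : j' = j
    · subst h
      simp [hv, Pi.single_apply, h2]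
    · have h1 : ¬ (a j = a j') := fun hh => h (((haa j j').1 hh).symm)
      simp [hv, Pi.single_apply, h, h1, h2]
  have hvappb : ∀ j j' : Fin k, v j' (b j) = if j' = j then -1 else 0 := by
    intro j j'
    have h2 : ¬ (b j = a j') := fun hh => hab j' j hh.symm
    by_cases h : j' = j
    · subst h
      simp [hv, Pi.single_apply, h2]
    · have h1 : ¬ (b j = b j') := fun hh => h (((hbb j j').1 hh).symm)
      simp [hv, Pi.single_apply, h, h1, h2]
  have hentryI : ∀ j j' : Fin k, v j ⬝ᵥ v j' = if j = j' then 2 else 0 := by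
    intro j j'
    rw [hvd j, hvapp j j', hvappb j j']
    by_cases h : j = j'
    · subst h
      rw [if_pos rfl, if_pos rfl, if_pos rfl]
      norm_num
    · have h' : ¬ (j' = j) := fun hh => h hh.symm
      rw [if_neg h, if_neg h', if_neg h']
      ring
  have hv0 : ∀ c : Fin k → ℝ, (∑ j, c j • v j) = 0 → c = 0 := by
    intro c hsum
    funext j0
    have h1 := congrFun hsum (a j0)
    simp only [Finset.sum_apply, Pi.smul_apply, Pi.zero_apply, smul_eq_mul] at h1
    rw [Finset.sum_congr rfl (fun j _ => by rw [hvapp j0 j])] at h1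
    simp only [mul_ite, mul_one, mul_zero, Finset.sum_ite_eq', Finset.mem_univ,
      if_pos] at h1
    simpa using h1
  have hq : ∀ c : Fin k → ℝ,
      (-1 : ℝ) * ((∑ j, c j • v j) ⬝ᵥ (∑ j, c j • v j))
        ≤ (∑ j, c j • v j) ⬝ᵥ (A *ᵥ (∑ j, c j • v j)) := by
    intro c
    have hxx : (∑ j, c j • v j) ⬝ᵥ (∑ j, c j • v j)
        = ∑ j, ∑ j', (c j * c j') * (v j ⬝ᵥ v j') := by
      have h1 := aux_dot_expand (1 : Matrix (Fin d) (Fin d) ℝ) c v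
      simpa [Matrix.one_mulVec] using h1
    rw [aux_dot_expand, hxx]
    apply le_of_eq
    rw [Finset.mul_sum]
    refine Finset.sum_congr rfl fun j _ => ?_
    rw [Finset.mul_sum]
    refine Finset.sum_congr rfl fun j' _ => ?_
    rw [hentryA, hentryI]
    by_cases h : j = j'
    · subst h
      rw [if_pos rfl, if_pos rfl]
      ring
    · rw [if_neg h, if_neg h]
      ring
  have hcount := aux_eig_count hA (-1) v hv0 hq
  rw [ge_iff_le, distEig, distEigList, dif_pos hA]
  apply aux_sorted_getD_ge
  · exact List.pairwise_insertionSort _ _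
  · have hperm := (List.perm_insertionSort (· ≥ ·)
      (List.ofFn hA.eigenvalues)).countP_eq (fun x => decide ((-1:ℝ) ≤ x))
    have hcc : (List.ofFn hA.eigenvalues).countP (fun x => decide ((-1:ℝ) ≤ x))
        = Fintype.card {i : Fin d // (-1:ℝ) ≤ hA.eigenvalues i} := by
      rw [List.ofFn_eq_map, List.countP_map, Fintype.card_subtype, Fin.univ_def]
      simp only [Finset.card, Finset.filter, Function.comp, List.countP_eq_length_filter,
        Multiset.quot_mk_to_coe'', Multiset.filter_coe, Multiset.coe_card]
      rfl
    rw [hperm, hcc]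
    omega
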